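/- In a strongly admissible labelling with min-max numbering MM, every in-labelled argument has an odd min-max number and every out-labelled argument has an even min-max number. -/
import Mathlib


inductive Label where
  | inn | out | und
deriving DecidableEq

/-- A labelling is admissible if every in-labelled argument has all its attackers
labelled out, and every out-labelled argument has at least one in-labelled attacker. -/
def Admissible {Ar : Type*} (att : Ar → Ar → Prop) (L : Ar → Label) : Prop :=
  (∀ x, L x = Label.inn → ∀ y, att y x → L y = Label.out) ∧
  (∀ x, L x = Label.out → ∃ y, att y x ∧ L y = Label.inn)

/-- A min-max numbering (with only natural-number values): in-arguments are numbered
1 + max of the numbers of their out-labelled attackers (max ∅ = 0), and out-arguments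
1 + min of the numbers of their in-labelled attackers. -/
def IsMinMax {Ar : Type*} (att : Ar → Ar → Prop) (L : Ar → Label) (MM : Ar → ℕ) : Prop :=
  (∀ x, L x = Label.inn → MM x = sSup (MM '' {y | att y x ∧ L y = Label.out}) + 1) ∧
  (∀ x, L x = Label.out → MM x = sInf (MM '' {y | att y x ∧ L y = Label.inn}) + 1)

/-- Strongly admissible: admissible and admitting a min-max numbering with only
natural-number (finite) values. -/
def StronglyAdmissible {Ar : Type*} (att : Ar → Ar → Prop) (L : Ar → Label) : Prop :=
  Admissible att L ∧ ∃ MM : Ar → ℕ, IsMinMax att L MM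

/-- Complete labelling: admissible, and every undec argument has an undec attacker
and no in-labelled attacker. -/
def CompleteLab {Ar : Type*} (att : Ar → Ar → Prop) (L : Ar → Label) : Prop :=
  Admissible att L ∧
  ∀ x, L x = Label.und →
    (∃ y, att y x ∧ L y = Label.und) ∧ ∀ y, att y x → L y ≠ Label.inn

/-- The order on labellings: Lab1 ⊑ Lab2 iff in(Lab1) ⊆ in(Lab2) and out(Lab1) ⊆ out(Lab2). -/
def LabLe {Ar : Type*} (L1 L2 : Ar → Label) : Prop :=
  (∀ x, L1 x = Label.inn → L2 x = Label.inn) ∧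
  (∀ x, L1 x = Label.out → L2 x = Label.out)

/-- In a strongly admissible labelling with min-max numbering MM,
in-labelled arguments have odd min-max numbers and out-labelled ones even. -/
theorem minMax_parity
    {Ar : Type*} [Fintype Ar] (att : Ar → Ar → Prop) (Lab : Ar → Label) (MM : Ar → ℕ)
    (hadm : Admissible att Lab) (hmm : IsMinMax att Lab MM) :
    (∀ x, Lab x = Label.inn → Odd (MM x)) ∧ (∀ x, Lab x = Label.out → Even (MM x)) := by

  have key : ∀ n : ℕ, ∀ x, MM x = n →
      (Lab x = Label.inn → Odd (MM x)) ∧ (Lab x = Label.out → Even (MM x)) := by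
    intro n
    induction n using Nat.strong_induction_on with
    | _ n ih =>
      intro x hx
      constructor
      · intro hin
        have heq := hmm.1 x hin
        set S := MM '' {y | att y x ∧ Lab y = Label.out} with hS
        by_cases hne : S.Nonempty
        · have hfin : S.Finite := (Set.toFinite _).image MM
          have hmem : sSup S ∈ S := hne.csSup_mem hfin
          obtain ⟨y, hy, hyv⟩ := hmem
          have hlt : MM y < n := by omega
          have := (ih (MM y) (by omega) y rfl).2 hy.2
          rw [heq, ← hyv]
          exact this.add_one
        · have : S = ∅ := Set.not_nonempty_iff_eq_empty.mp hne
          rw [heq, this]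
          simp
      · intro hout
        have heq := hmm.2 x hout
        obtain ⟨y, hy, hyin⟩ := hadm.2 x hout
        have hne : (MM '' {y | att y x ∧ Lab y = Label.inn}).Nonempty :=
          ⟨MM y, y, ⟨hy, hyin⟩, rfl⟩
        have hmem := Nat.sInf_mem hne
        obtain ⟨z, hz, hzv⟩ := hmem
        have := (ih (MM z) (by omega) z rfl).1 hz.2
        rw [heq, ← hzv]
        exact this.add_one
  exact ⟨fun x h => (key (MM x) x rfl).1 h, fun x h => (key (MM x) x rfl).2 h⟩
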